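/- arXiv:1608.03081 — 2 statements merged into one kernel-verified Lean document; each statement's English description precedes it below -/
import Mathlib

section
/- Let X_n be ℝ^d-valued random vectors such that r_n(X_{nj} - θ_j) is tight for each coordinate j, with r_n → ∞, and let a_{nj} > 0 satisfy max_j a_{nj} → 0 and r_n · min_j a_{nj} → ∞. Define the random set b_n = {j : |X_{nj} - c_j| > a_{nj}} and b(θ) = {j : θ_j ≠ c_j}. Then Pr(b_n = b(θ)) → 1 as n → ∞. -/
open Filter MeasureTheory

/-- Consistent support recovery: if each `rₙ(Xₙⱼ - θⱼ)` is tight, `rₙ → ∞`,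
`max_j aₙⱼ → 0` and `rₙ · min_j aₙⱼ → ∞`, then with
`bₙ = {j : |Xₙⱼ - cⱼ| > aₙⱼ}` and `b(θ) = {j : θⱼ ≠ cⱼ}`,
`Pr(bₙ = b(θ)) → 1`. -/
theorem stmt_17 (d : ℕ) (hd : 0 < d) {Ω : Type*} [MeasurableSpace Ω]
    (μ : Measure Ω) [IsProbabilityMeasure μ]
    (X : ℕ → Ω → Fin d → ℝ) (θ c : Fin d → ℝ)
    (r : ℕ → ℝ) (hr_pos : ∀ n, 0 < r n) (hr : Tendsto r atTop atTop)
    (a : ℕ → Fin d → ℝ) (ha_pos : ∀ n j, 0 < a n j)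
    (hamax : ∀ j, Tendsto (fun n => a n j) atTop (nhds 0))
    (hamin : ∀ j, Tendsto (fun n => r n * a n j) atTop atTop)
    (htight : ∀ j, ∀ ε : ℝ, 0 < ε → ∃ M : ℝ,
      ∀ᶠ n in atTop, μ {ω | M < r n * |X n ω j - θ j|} < ENNReal.ofReal ε) :
    Tendsto (fun n =>
        μ {ω | {j | a n j < |X n ω j - c j|} = {j | θ j ≠ c j}})
      atTop (nhds 1) := by
  classical
  set E : ℕ → Fin d → Set Ω :=
    fun n j => {ω | ¬ (a n j < |X n ω j - c j| ↔ θ j ≠ c j)} with hE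
  -- each bad event has vanishing probability
  have key : ∀ j, ∀ ε : ℝ, 0 < ε → ∀ᶠ n in atTop, μ (E n j) < ENNReal.ofReal ε := by
    intro j ε hε
    obtain ⟨M, hM⟩ := htight j ε hε
    by_cases hθ : θ j = c j
    · have hr' : ∀ᶠ n in atTop, M < r n * a n j := (hamin j).eventually_gt_atTop M
      filter_upwards [hM, hr'] with n h1 h2
      refine lt_of_le_of_lt (measure_mono ?_) h1
      intro ω hω
      simp only [hE, Set.mem_setOf_eq, hθ, ne_eq, not_true_eq_false, iff_false,
        not_not] at hω
      have : r n * a n j < r n * |X n ω j - c j| :=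
        mul_lt_mul_of_pos_left hω (hr_pos n)
      simpa [hθ] using h2.trans this
    · have hδ : 0 < |θ j - c j| := abs_pos.mpr (sub_ne_zero.mpr hθ)
      have ha' : ∀ᶠ n in atTop, a n j < |θ j - c j| / 2 :=
        (hamax j).eventually_lt_const (by positivity)
      have hr' : ∀ᶠ n in atTop, M / (|θ j - c j| / 2) < r n :=
        hr.eventually_gt_atTop _
      filter_upwards [hM, ha', hr'] with n h1 h2 h3
      refine lt_of_le_of_lt (measure_mono ?_) h1
      intro ω hω
      simp only [hE, Set.mem_setOf_eq, hθ, ne_eq, not_false_eq_true, iff_true,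
        not_lt] at hω
      have htri : |θ j - c j| ≤ |X n ω j - θ j| + |X n ω j - c j| := by
        have := abs_sub_abs_le_abs_sub (θ j - c j) (X n ω j - c j)
        calc |θ j - c j| = |(θ j - c j) - (X n ω j - c j) + (X n ω j - c j)| := by
              ring_nf
          _ ≤ |(θ j - c j) - (X n ω j - c j)| + |X n ω j - c j| := abs_add_le _ _
          _ = |X n ω j - θ j| + |X n ω j - c j| := by rw [abs_sub_comm]; ring_nf
      have hX : |θ j - c j| / 2 < |X n ω j - θ j| := by
        have : a n j + |X n ω j - θ j| ≥ |θ j - c j| := by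
          linarith [htri, hω]
        linarith
      have : M < r n * (|θ j - c j| / 2) := (div_lt_iff₀ (by positivity)).mp h3
      calc M < r n * (|θ j - c j| / 2) := this
        _ < r n * |X n ω j - θ j| := mul_lt_mul_of_pos_left hX (hr_pos n)
  have hEj : ∀ j, Tendsto (fun n => μ (E n j)) atTop (nhds 0) := by
    intro j
    rw [ENNReal.tendsto_nhds_zero]
    intro ε hε
    rcases eq_or_ne ε ⊤ with rfl | hne
    · exact Eventually.of_forall fun n => le_top
    · have hε' : 0 < ε.toReal := ENNReal.toReal_pos hε.ne' hne
      filter_upwards [key j ε.toReal hε'] with n hn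
      exact le_of_lt (by rwa [ENNReal.ofReal_toReal hne] at hn)
  have hsum : Tendsto (fun n => ∑ j, μ (E n j)) atTop (nhds 0) := by
    have := tendsto_finset_sum Finset.univ (fun j _ => hEj j)
    simpa using this
  have hsub : ∀ n, {ω | {j | a n j < |X n ω j - c j|} = {j | θ j ≠ c j}}ᶜ
      ⊆ ⋃ j, E n j := by
    intro n ω hω
    simp only [Set.mem_compl_iff, Set.mem_setOf_eq] at hω
    by_contra h
    simp only [Set.mem_iUnion, hE, Set.mem_setOf_eq, not_exists, not_not] at h
    exact hω (Set.ext fun j => h j)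
  have hcompl : Tendsto
      (fun n => μ {ω | {j | a n j < |X n ω j - c j|} = {j | θ j ≠ c j}}ᶜ)
      atTop (nhds 0) := by
    refine tendsto_of_tendsto_of_tendsto_of_le_of_le tendsto_const_nhds hsum
      (fun n => zero_le) (fun n => ?_)
    refine (measure_mono (hsub n)).trans ?_
    exact (measure_iUnion_le _).trans (by rw [tsum_fintype])
  have hlow : ∀ (s : Set Ω), (1 : ENNReal) - μ sᶜ ≤ μ s := by
    intro s
    have h := measure_union_le (μ := μ) s sᶜ
    rw [Set.union_compl_self, measure_univ] at h
    exact tsub_le_iff_right.mpr h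
  have hlowt : Tendsto (fun n => (1 : ENNReal) -
      μ {ω | {j | a n j < |X n ω j - c j|} = {j | θ j ≠ c j}}ᶜ) atTop (nhds 1) := by
    have := ENNReal.Tendsto.sub (tendsto_const_nhds (x := (1 : ENNReal))) hcompl
      (Or.inl (by norm_num))
    simpa using this
  refine tendsto_of_tendsto_of_tendsto_of_le_of_le hlowt tendsto_const_nhds
    (fun n => hlow _) (fun n => prob_le_one)
end

section
/- Let V be a symmetric positive definite d×d matrix partitioned by a nonempty proper subset b, and let W be the d×d matrix whose b×b block is V_bb^{-1} and all other blocks are zero. Then W ≤ V^{-1} in the Loewner order. -/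
open Matrix

lemma sum_subtype_ite {α : Type*} [Fintype α] [DecidableEq α] (p : α → Prop) [DecidablePred p]
    (i : α) (f : {x // p x} → ℝ) :
    (∑ a : {x // p x}, if a.val = i then f a else 0) = if h : p i then f ⟨i, h⟩ else 0 := by
  split
  · next h =>
    rw [Fintype.sum_eq_single ⟨i, h⟩ (by rintro ⟨b, hb⟩ hbi; rw [if_neg]; simpa using hbi)]
    simp
  · next h =>
    apply Finset.sum_eq_zero; intro a _
    rw [if_neg]; rintro rfl; exact h a.prop

/-- For a symmetric positive definite `V` partitioned by a nonempty proper subset `b`,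
the `d×d` matrix `W` whose `b×b` block is `V_bb⁻¹` and whose other blocks are `0`
satisfies `W ≤ V⁻¹` in the Loewner order. -/
theorem stmt_19 (d : ℕ) (V : Matrix (Fin d) (Fin d) ℝ)
    (hV : V.PosDef) (p : Fin d → Prop) [DecidablePred p]
    (hb : ∃ i, p i) (hb' : ∃ i, ¬ p i) :
    let Vbb : Matrix {i // p i} {i // p i} ℝ :=
      V.submatrix Subtype.val Subtype.val
    let W : Matrix (Fin d) (Fin d) ℝ := fun i j =>
      if h : p i ∧ p j then Vbb⁻¹ ⟨i, h.1⟩ ⟨j, h.2⟩ else 0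
    (V⁻¹ - W).PosSemidef := by
  intro Vbb W
  -- Vbb is positive definite
  have hVbb : Vbb.PosDef := by
    refine posDef_iff_dotProduct_mulVec.mpr ⟨?_, ?_⟩
    · ext a b
      have := congrFun (congrFun hV.isHermitian b.val) a.val
      simpa [Vbb, conjTranspose_apply] using this.symm
    · intro x hx
      set x' : Fin d → ℝ := fun i => if h : p i then x ⟨i, h⟩ else 0 with hx'
      have hx'0 : x' ≠ 0 := by
        intro h0
        apply hx
        funext a
        have := congrFun h0 a.val
        simpa [x', a.prop] using this
      have := hV.dotProduct_mulVec_pos hx'0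
      have heq : x' ⬝ᵥ V *ᵥ x' = x ⬝ᵥ Vbb *ᵥ x := by
        unfold x'
        rw [dotProduct, dotProduct]
        rw [← Fintype.sum_subtype_add_sum_subtype p
          (fun i => (if h : p i then x ⟨i, h⟩ else 0) * (V *ᵥ fun i => if h : p i then x ⟨i, h⟩ else 0) i)]
        have h2 : ∀ a : {x // ¬ p x},
            (if h : p a.val then x ⟨a.val, h⟩ else 0) *
              (V *ᵥ fun i => if h : p i then x ⟨i, h⟩ else 0) a.val = 0 := by
          intro a; rw [dif_neg a.prop, zero_mul]
        rw [Finset.sum_congr rfl (fun a _ => h2 a), Finset.sum_const_zero, add_zero]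
        apply Finset.sum_congr rfl
        intro a _
        rw [dif_pos a.prop]
        congr 1
        rw [mulVec, mulVec, dotProduct, dotProduct]
        rw [← Fintype.sum_subtype_add_sum_subtype p
          (fun j => V a.val j * if h : p j then x ⟨j, h⟩ else 0)]
        have h3 : ∀ b : {x // ¬ p x}, V a.val b.val * (if h : p b.val then x ⟨b.val, h⟩ else 0) = 0 := by
          intro b; rw [dif_neg b.prop, mul_zero]
        rw [Finset.sum_congr rfl (fun b _ => h3 b), Finset.sum_const_zero, add_zero]
        apply Finset.sum_congr rfl
        intro b _
        rw [dif_pos b.prop]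
        rfl
      simp only [star_trivial] at this ⊢
      rw [heq] at this
      exact this
  have hVbbInv : IsUnit Vbb.det := isUnit_iff_ne_zero.mpr hVbb.det_pos.ne'
  have hVinv : IsUnit V.det := isUnit_iff_ne_zero.mpr hV.det_pos.ne'
  -- The embedding matrix
  set E : Matrix {i // p i} (Fin d) ℝ := Matrix.of fun a i => if a.val = i then 1 else 0 with hE
  have hWE : W = Eᵀ * Vbb⁻¹ * E := by
    ext i j
    rw [Matrix.mul_apply]
    have : ∀ b : {x // p x}, (Eᵀ * Vbb⁻¹) i b * E b j
        = if b.val = j then (Eᵀ * Vbb⁻¹) i b else 0 := by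
      intro b; simp [hE, mul_ite]
    rw [Finset.sum_congr rfl (fun b _ => this b), sum_subtype_ite]
    have key : ∀ b : {x // p x}, (Eᵀ * Vbb⁻¹) i b = if h : p i then Vbb⁻¹ ⟨i, h⟩ b else 0 := by
      intro b
      rw [Matrix.mul_apply]
      have : ∀ a : {x // p x}, Eᵀ i a * Vbb⁻¹ a b = if a.val = i then Vbb⁻¹ a b else 0 := by
        intro a; simp [hE, transpose_apply, ite_mul]
      rw [Finset.sum_congr rfl (fun a _ => this a), sum_subtype_ite]
    by_cases hi : p i <;> by_cases hj : p j <;>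
      simp [W, hi, hj, key]
  have hEVE : E * V * Eᵀ = Vbb := by
    ext a b
    rw [Matrix.mul_apply]
    have : ∀ j, (E * V) a j * Eᵀ j b = if b.val = j then (E * V) a j else 0 := by
      intro j; simp [hE, transpose_apply, mul_ite, eq_comm]
    rw [Finset.sum_congr rfl (fun j _ => this j)]
    rw [Finset.sum_ite_eq Finset.univ b.val fun j => (E * V) a j]
    simp only [Finset.mem_univ, if_pos]
    rw [Matrix.mul_apply]
    have : ∀ i, E a i * V i b.val = if a.val = i then V i b.val else 0 := by
      intro i; simp [hE, ite_mul]
    rw [Finset.sum_congr rfl (fun i _ => this i)]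
    rw [Finset.sum_ite_eq Finset.univ a.val fun i => V i b.val]
    simp [Vbb]
  -- W * V * W = W
  have hWVW : W * V * W = W := by
    rw [hWE]
    calc Eᵀ * Vbb⁻¹ * E * V * (Eᵀ * Vbb⁻¹ * E)
        = Eᵀ * Vbb⁻¹ * (E * V * Eᵀ) * Vbb⁻¹ * E := by simp only [Matrix.mul_assoc]
      _ = Eᵀ * Vbb⁻¹ * E := by
          rw [hEVE]
          rw [show Eᵀ * Vbb⁻¹ * Vbb * Vbb⁻¹ * E = Eᵀ * (Vbb⁻¹ * Vbb * Vbb⁻¹) * E by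
            simp only [Matrix.mul_assoc]]
          rw [Matrix.nonsing_inv_mul _ hVbbInv, Matrix.one_mul]
  -- W is symmetric
  have hWsym : Wᴴ = W := by
    rw [hWE]
    have h1 : (Vbb⁻¹)ᴴ = Vbb⁻¹ := (hVbb.isHermitian.inv)
    have h2 : (Vbb⁻¹)ᵀ = Vbb⁻¹ := by simpa using h1
    simp [Matrix.conjTranspose_mul, Matrix.mul_assoc, h1, h2]
  have hVinvH : (V⁻¹)ᴴ = V⁻¹ := hV.isHermitian.inv
  have hA : (V⁻¹ - W)ᴴ = V⁻¹ - W := by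
    rw [Matrix.conjTranspose_sub, hVinvH, hWsym]
  have key : V⁻¹ - W = (V⁻¹ - W)ᴴ * V * (V⁻¹ - W) := by
    rw [hA]
    have expand : (V⁻¹ - W) * V * (V⁻¹ - W)
        = V⁻¹ * V * V⁻¹ - V⁻¹ * (V * W) - W * V * V⁻¹ + W * V * W := by
      noncomm_ring
    rw [expand, hWVW, Matrix.nonsing_inv_mul _ hVinv, Matrix.one_mul,
      ← Matrix.mul_assoc, Matrix.nonsing_inv_mul _ hVinv, Matrix.one_mul,
      Matrix.mul_assoc, Matrix.mul_nonsing_inv _ hVinv, Matrix.mul_one]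
    abel
  rw [key]
  exact hV.posSemidef.conjTranspose_mul_mul_same _
end
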